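/- For every fixed c>0, the map u ↦ f(c,u) on the interval {u ∈ ℝ : (1−γ)u>0} is convex when γψ>1, and is strictly concave (in particular not convex) when γψ<1. -/

import Mathlib

open Set Filter

private lemma ez_hasDerivAt (k q B : ℝ) {x : ℝ} (hx : k * x ≠ 0) :
    HasDerivAt (fun u : ℝ => B * (k * u) ^ q) (B * q * k * (k * x) ^ (q - 1)) x := by
  have h1 : HasDerivAt (fun u : ℝ => k * u) k x := by
    simpa using (hasDerivAt_id x).const_mul k
  have h2 := (Real.hasDerivAt_rpow_const (x := k * x) (p := q) (Or.inl hx)).comp x h1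
  have h3 := h2.const_mul B
  rw [show B * q * k * (k * x) ^ (q - 1) = B * (q * (k * x) ^ (q - 1) * k) by ring]
  exact h3

private lemma ez_isOpen (k : ℝ) : IsOpen {u : ℝ | 0 < k * u} :=
  isOpen_lt continuous_const (continuous_const.mul continuous_id)

private lemma ez_convex (k : ℝ) : Convex ℝ {u : ℝ | 0 < k * u} := by
  have : {u : ℝ | 0 < k * u} = (fun u : ℝ => k * u) ⁻¹' Set.Ioi 0 := rfl
  rw [this]
  exact (convex_Ioi (0:ℝ)).linear_preimage
    { toFun := fun u => k * u, map_add' := by intro a b; ring,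
      map_smul' := by intro m a; simp; ring }

private lemma ez_deriv2 (k p B d : ℝ) {x : ℝ} (hx : 0 < k * x) :
    deriv^[2] (fun u : ℝ => B * (k * u) ^ p - d * u) x
      = B * p * (p - 1) * k ^ 2 * (k * x) ^ (p - 2) := by
  set f : ℝ → ℝ := fun u => B * (k * u) ^ p - d * u with hf
  set g : ℝ → ℝ := fun u => B * p * k * (k * u) ^ (p - 1) - d with hg
  have hf' : ∀ y : ℝ, 0 < k * y → HasDerivAt f (g y) y := by
    intro y hy
    have h1 := (ez_hasDerivAt k p B hy.ne').sub
      (by simpa using (hasDerivAt_id y).const_mul d)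
    exact h1
  have hev : deriv f =ᶠ[nhds x] g := by
    filter_upwards [(ez_isOpen k).mem_nhds hx] with y hy
    exact (hf' y hy).deriv
  have hg' : HasDerivAt g (B * p * k * (p - 1) * k * (k * x) ^ (p - 1 - 1)) x :=
    (ez_hasDerivAt k (p - 1) (B * p * k) hx.ne').sub_const d
  have h2 : deriv^[2] f x = deriv (deriv f) x := by
    simp [Function.iterate_succ, Function.comp]
  rw [h2, hev.deriv_eq, hg'.deriv]
  have : p - 1 - 1 = p - 2 := by ring
  rw [this]; ring

private lemma ez_contOn (k p B d : ℝ) :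
    ContinuousOn (fun u : ℝ => B * (k * u) ^ p - d * u) {u : ℝ | 0 < k * u} := by
  intro x hx
  have h1 := (ez_hasDerivAt k p B (ne_of_gt hx)).sub
      (by simpa using (hasDerivAt_id x).const_mul d)
  exact h1.continuousAt.continuousWithinAt

private lemma ez_strictConvex (k p B d : ℝ) (hsign : 0 < B * p * (p - 1) * k ^ 2) :
    StrictConvexOn ℝ {u : ℝ | 0 < k * u} (fun u : ℝ => B * (k * u) ^ p - d * u) := by
  refine strictConvexOn_of_deriv2_pos (ez_convex k) (ez_contOn k p B d) ?_
  intro x hx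
  rw [(ez_isOpen k).interior_eq] at hx
  rw [ez_deriv2 k p B d hx]
  exact mul_pos hsign (Real.rpow_pos_of_pos hx _)

private lemma ez_strictConcave (k p B d : ℝ) (hsign : B * p * (p - 1) * k ^ 2 < 0) :
    StrictConcaveOn ℝ {u : ℝ | 0 < k * u} (fun u : ℝ => B * (k * u) ^ p - d * u) := by
  refine strictConcaveOn_of_deriv2_neg (ez_convex k) (ez_contOn k p B d) ?_
  intro x hx
  rw [(ez_isOpen k).interior_eq] at hx
  rw [ez_deriv2 k p B d hx]
  exact mul_neg_of_neg_of_pos hsign (Real.rpow_pos_of_pos hx _)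

theorem epsteinZin_aggregator_convexity_in_u
    (δ γ ψ θ : ℝ) (hδ : 0 < δ) (hγ : 0 < γ) (hγ1 : γ ≠ 1)
    (hψ : 0 < ψ) (hψ1 : ψ ≠ 1) (hθ : θ = (1 - γ) / (1 - 1 / ψ))
    (c : ℝ) (hc : 0 < c) :
    (1 < γ * ψ →
      ConvexOn ℝ {u : ℝ | 0 < (1 - γ) * u}
        (fun u : ℝ =>
          δ * (c ^ (1 - 1 / ψ) / (1 - 1 / ψ)) * ((1 - γ) * u) ^ (1 - 1 / θ)
            - δ * θ * u)) ∧
    (γ * ψ < 1 →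
      StrictConcaveOn ℝ {u : ℝ | 0 < (1 - γ) * u}
        (fun u : ℝ =>
          δ * (c ^ (1 - 1 / ψ) / (1 - 1 / ψ)) * ((1 - γ) * u) ^ (1 - 1 / θ)
            - δ * θ * u) ∧
      ¬ ConvexOn ℝ {u : ℝ | 0 < (1 - γ) * u}
        (fun u : ℝ =>
          δ * (c ^ (1 - 1 / ψ) / (1 - 1 / ψ)) * ((1 - γ) * u) ^ (1 - 1 / θ)
            - δ * θ * u)) := by
  have ha : (1 : ℝ) - 1 / ψ ≠ 0 := by
    intro h
    apply hψ1
    have h1 : (1:ℝ)/ψ = 1 := by linarith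
    field_simp at h1
    linarith
  have hk : (1 : ℝ) - γ ≠ 0 := fun h => hγ1 (by linarith)
  have hca : (0:ℝ) < c ^ ((1:ℝ) - 1 / ψ) := Real.rpow_pos_of_pos hc _
  have haux : ∀ A K X : ℝ, A ≠ 0 → K ≠ 0 →
      δ * (X / A) * (1 - A / K) * ((1 - A / K) - 1) * K ^ 2 = δ * X * (A - K) := by
    intro A K X hA hK
    field_simp
    ring
  have hkey : (δ * (c ^ ((1:ℝ) - 1 / ψ) / (1 - 1 / ψ))) * (1 - 1 / θ) * ((1 - 1 / θ) - 1)
      * (1 - γ) ^ 2 = δ * c ^ ((1:ℝ) - 1 / ψ) * (γ * ψ - 1) / ψ := by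
    rw [hθ, one_div_div, haux _ _ _ ha hk]
    obtain ⟨X, hXe⟩ : ∃ X : ℝ, c ^ ((1:ℝ) - 1 / ψ) = X := ⟨_, rfl⟩
    rw [hXe]
    field_simp
    ring
  constructor
  · intro hγψ
    refine (ez_strictConvex (1 - γ) (1 - 1 / θ)
      (δ * (c ^ ((1:ℝ) - 1 / ψ) / (1 - 1 / ψ))) (δ * θ) ?_).convexOn
    rw [hkey]
    exact div_pos (mul_pos (mul_pos hδ hca) (by linarith)) hψ
  · intro hγψ
    have hcv := ez_strictConcave (1 - γ) (1 - 1 / θ)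
      (δ * (c ^ ((1:ℝ) - 1 / ψ) / (1 - 1 / ψ))) (δ * θ)
      (by rw [hkey]
          exact div_neg_of_neg_of_pos
            (mul_neg_of_pos_of_neg (mul_pos hδ hca) (by linarith)) hψ)
    refine ⟨hcv, ?_⟩
    intro hcx
    have hx : (1/(1-γ) : ℝ) ∈ {u : ℝ | 0 < (1-γ) * u} := by
      simp only [Set.mem_setOf_eq]
      rw [mul_one_div, div_self hk]; norm_num
    have hy : (2/(1-γ) : ℝ) ∈ {u : ℝ | 0 < (1-γ) * u} := by
      simp only [Set.mem_setOf_eq]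
      rw [mul_div_assoc', mul_comm, mul_div_assoc, div_self hk]; norm_num
    have hne : (1/(1-γ) : ℝ) ≠ 2/(1-γ) := by
      intro h
      field_simp at h
      norm_num at h
    have h1 := hcv.2 hx hy hne (by norm_num : (0:ℝ) < 1/2) (by norm_num : (0:ℝ) < 1/2)
      (by norm_num)
    have h2 := hcx.2 hx hy (by norm_num : (0:ℝ) ≤ 1/2) (by norm_num : (0:ℝ) ≤ 1/2)
      (by norm_num)
    exact absurd h2 (not_le.mpr h1)
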